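/- Let P_1, …, P_k be trajectories forming a cycle in the communication graph, all robots flying in the same direction with common period T > 0. For each i let t_i ∈ (0,T) be the time to traverse the 'inside' section of trajectory i (between its two link positions on the cycle, in the direction of travel) and r_i = T − t_i the time for the complementary section. Then the cycle can be synchronized (there exist starting positions making every consecutive pair meet at their link positions) if and only if there exists a natural number z with 0 < z < k such that t_1 + t_2 + ⋯ + t_k = zT, equivalently r_1 + ⋯ + r_k = (k − z)T. -/

import Mathlib

/-- a cycle `P_1, …, P_k` of trajectories, all traversed in the same
direction with common period `T`, inside-section times `t_i ∈ (0,T)`, can be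
synchronized (there are starting phases in `ℝ/Tℝ` whose consecutive differences
are the section times) iff `t_1 + ⋯ + t_k = z T` for some natural `z` with
`0 < z < k`, equivalently `(T−t_1) + ⋯ + (T−t_k) = (k−z) T`. -/
theorem stmt7 (k : ℕ) (hk : 0 < k) [inst : NeZero k] (T : ℝ) (hT : 0 < T)
    (t : Fin k → ℝ) (ht : ∀ i, t i ∈ Set.Ioo (0 : ℝ) T) :
    (∃ α : Fin k → AddCircle T,
        ∀ m : Fin k, α (m + 1) = α m + ((t m : ℝ) : AddCircle T)) ↔
      ∃ z : ℕ, 0 < z ∧ z < k ∧ (∑ i : Fin k, t i) = z * T ∧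
        (∑ i : Fin k, (T - t i)) = (k - z : ℕ) * T := by
  have hne : (Finset.univ : Finset (Fin k)).Nonempty := by
    simp [Finset.univ_nonempty_iff, Fin.pos_iff_nonempty.mp hk]
  have hsum_pos : 0 < ∑ i : Fin k, t i :=
    Finset.sum_pos (fun i _ => (ht i).1) hne
  have hsum_lt : (∑ i : Fin k, t i) < k * T := by
    calc (∑ i : Fin k, t i) < ∑ _i : Fin k, T :=
          Finset.sum_lt_sum_of_nonempty hne (fun i _ => (ht i).2)
      _ = k * T := by simp [mul_comm]
  constructor
  · rintro ⟨α, hα⟩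
    have h0 : ((∑ i : Fin k, t i : ℝ) : AddCircle T) = 0 := by
      have hperm : ∑ m : Fin k, α (m + 1) = ∑ m : Fin k, α m :=
        Fintype.sum_equiv (Equiv.addRight (1 : Fin k)) _ _ (fun x => rfl)
      have h1 : ∑ m : Fin k, (α (m + 1) - α m) = ∑ m : Fin k, ((t m : ℝ) : AddCircle T) := by
        apply Finset.sum_congr rfl
        intro m _
        rw [hα m]; abel
      rw [Finset.sum_sub_distrib, hperm, sub_self] at h1
      have hcast : ((∑ i : Fin k, t i : ℝ) : AddCircle T) = ∑ m : Fin k, ((t m : ℝ) : AddCircle T) := by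
        induction (Finset.univ : Finset (Fin k)) using Finset.induction with
        | empty => simp
        | insert _ _ h ih => rw [Finset.sum_insert h, Finset.sum_insert h, AddCircle.coe_add, ih]
      rw [hcast, ← h1]
    obtain ⟨n, hn⟩ := (AddCircle.coe_eq_zero_iff T).mp h0
    rw [zsmul_eq_mul] at hn
    have hnpos : 0 < n := by
      by_contra h
      push_neg at h
      have : (n : ℝ) ≤ 0 := by exact_mod_cast h
      nlinarith [hn ▸ hsum_pos]
    have hnk : n < k := by
      by_contra h
      push_neg at h
      have : (k : ℝ) ≤ (n : ℝ) := by exact_mod_cast h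
      nlinarith [hn ▸ hsum_lt]
    have hcastn : ((n.toNat : ℕ) : ℝ) = (n : ℝ) := by
      exact_mod_cast congrArg (Int.cast : ℤ → ℝ) (Int.toNat_of_nonneg hnpos.le)
    refine ⟨n.toNat, by omega, by omega, ?_, ?_⟩
    · rw [← hn, hcastn]
    · have hle : n.toNat ≤ k := by omega
      rw [Finset.sum_sub_distrib, ← hn, Nat.cast_sub hle, hcastn]
      simp only [Finset.sum_const, Finset.card_univ, Fintype.card_fin, nsmul_eq_mul]
      ring
  · rintro ⟨z, hz0, hzk, hsum, -⟩
    classical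
    set s : ℕ → ℝ := fun n => ∑ i ∈ Finset.range n, t (open Fin.NatCast in (i : Fin k)) with hs
    refine ⟨fun m => ((s m.val : ℝ) : AddCircle T), ?_⟩
    intro m
    have hsk : s k = ∑ i : Fin k, t i := by
      show (∑ i ∈ Finset.range k, t (open Fin.NatCast in (i : Fin k))) = _
      rw [← Fin.sum_univ_eq_sum_range (fun i => t (open Fin.NatCast in (i : Fin k))) k]
      exact Finset.sum_congr rfl (fun i _ => by simp [Fin.cast_val_eq_self])
    have hsT : ((s k : ℝ) : AddCircle T) = 0 := by
      rw [hsk, hsum]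
      exact (AddCircle.coe_eq_zero_iff T).mpr ⟨z, by rw [zsmul_eq_mul]; norm_num⟩
    have hstep : ∀ n : ℕ, ∀ hn : n < k, s (n + 1) = s n + t ⟨n, hn⟩ := by
      intro n hn
      show (∑ i ∈ Finset.range (n + 1), t (open Fin.NatCast in (i : Fin k))) = (∑ i ∈ Finset.range n, t (open Fin.NatCast in (i : Fin k))) + t ⟨n, hn⟩
      rw [Finset.sum_range_succ]
      congr 1
      exact congrArg t (Fin.ext (Fin.val_cast_of_lt hn))
    show ((s (m + 1).val : ℝ) : AddCircle T) = ((s m.val : ℝ) : AddCircle T) + ((t m : ℝ) : AddCircle T)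
    have haddval : (m + 1 : Fin k).val = (m.val + 1 % k) % k := by
      have : (m + 1 : Fin k).val = (m.val + (1 : Fin k).val) % k := rfl
      rw [this, Fin.val_one']
    by_cases hm : m.val + 1 < k
    · have h1 : (m + 1 : Fin k).val = m.val + 1 := by
        rw [haddval, Nat.mod_eq_of_lt (by omega : 1 < k), Nat.mod_eq_of_lt hm]
      rw [h1, hstep m.val m.isLt, AddCircle.coe_add, Fin.eta]
    · have hml : m.val = k - 1 := by omega
      have h1 : (m + 1 : Fin k).val = 0 := by
        rw [haddval]
        rcases Nat.lt_or_ge 1 k with h | h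
        · rw [Nat.mod_eq_of_lt h, hml, Nat.sub_add_cancel hk, Nat.mod_self]
        · have hk1 : k = 1 := by omega
          subst hk1; simp
      have hkeq : s k = s m.val + t m := by
        have h2 := hstep m.val m.isLt
        rw [Fin.eta m m.isLt] at h2
        rw [congrArg s (by omega : k = m.val + 1), h2]
      rw [h1]
      have hz : ((s m.val : ℝ) : AddCircle T) + ((t m : ℝ) : AddCircle T) = 0 := by
        rw [← AddCircle.coe_add, ← hkeq, hsT]
      rw [hz]
      show ((s 0 : ℝ) : AddCircle T) = 0
      have hs0 : s 0 = 0 := by simp [hs]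
      rw [hs0]
      norm_num
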